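/- Let G be a countable amenable group with identity e and suppose E ⊆ G × G has positive right upper density with respect to a right Følner sequence Φ on G × G. Then the set { g ∈ G : d̄_Φ(E ∩ E·(g⁻¹, e)) > 0 } is both right and left IP*, where E·(g⁻¹,e) = { (a g⁻¹, b) : (a,b) ∈ E }. -/

import Mathlib

open scoped Classical

/-- `Φ` is a right Følner sequence: finite nonempty sets with `|Φₙ ∩ Φₙg|/|Φₙ| → 1`. -/
def rightFolner {G : Type*} [Group G] (Φ : ℕ → Finset G) : Prop :=
  (∀ n, (Φ n).Nonempty) ∧ ∀ g : G,
    Filter.Tendsto (fun n => (((Φ n) ∩ (Φ n).image (· * g)).card : ℝ) / ((Φ n).card : ℝ))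
      Filter.atTop (nhds 1)

/-- The right upper density of `E` along `Φ`: `limsup |E ∩ Φₙ|/|Φₙ|`. -/
noncomputable def upperDensity {G : Type*} [Group G] (Φ : ℕ → Finset G) (E : Set G) : ℝ :=
  Filter.atTop.limsup fun n => (((Φ n).filter (· ∈ E)).card : ℝ) / ((Φ n).card : ℝ)

/-- The product of `x_n` over `F` with indices taken in decreasing order. -/
def prodDec {G : Type*} [Group G] (F : Finset ℕ) (x : ℕ → G) : G :=
  ((F.sort (· ≤ ·)).reverse.map x).prod

/-- The product of `x_n` over `F` with indices taken in increasing order. -/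
def prodInc {G : Type*} [Group G] (F : Finset ℕ) (x : ℕ → G) : G :=
  ((F.sort (· ≤ ·)).map x).prod

/-- The left finite product set of a sequence `(x_n)` in `G`. -/
def FPL {G : Type*} [Group G] (x : ℕ → G) : Set G :=
  { g | ∃ F : Finset ℕ, F.Nonempty ∧ g = prodDec F x }

/-- The right finite product set of a sequence `(x_n)` in `G`. -/
def FPR {G : Type*} [Group G] (x : ℕ → G) : Set G :=
  { g | ∃ F : Finset ℕ, F.Nonempty ∧ g = prodInc F x }

/-- `X` is left IP*: it meets every `FP_L(x_n)`. -/
def leftIPStar {G : Type*} [Group G] (X : Set G) : Prop :=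
  ∀ x : ℕ → G, (X ∩ FPL x).Nonempty

/-- `X` is right IP*: it meets every `FP_R(x_n)`. -/
def rightIPStar {G : Type*} [Group G] (X : Set G) : Prop :=
  ∀ x : ℕ → G, (X ∩ FPR x).Nonempty

namespace Stmt16Aux

open Filter Finset

set_option linter.unusedSectionVars false

variable {H : Type*} [Group H]

noncomputable def dens (Φ : ℕ → Finset H) (S : Set H) (n : ℕ) : ℝ :=
  (((Φ n).filter (· ∈ S)).card : ℝ) / ((Φ n).card : ℝ)

lemma upperDensity_eq (Φ : ℕ → Finset H) (S : Set H) :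
    upperDensity Φ S = Filter.atTop.limsup (dens Φ S) := rfl

variable {Φ : ℕ → Finset H}

lemma dens_nonneg (S : Set H) (n : ℕ) : 0 ≤ dens Φ S n := by
  unfold dens; positivity

lemma dens_le_one (S : Set H) (n : ℕ) : dens Φ S n ≤ 1 := by
  unfold dens
  rcases Nat.eq_zero_or_pos (Φ n).card with h | h
  · simp [h]
  · rw [div_le_one (by exact_mod_cast h)]
    exact_mod_cast Finset.card_le_card (Finset.filter_subset _ _)

noncomputable def err (Φ : ℕ → Finset H) (t : H) (n : ℕ) : ℝ :=
  1 - ((((Φ n) ∩ (Φ n).image (· * t)).card : ℝ) / ((Φ n).card : ℝ))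

lemma err_tendsto (hΦ : rightFolner Φ) (t : H) :
    Tendsto (err Φ t) atTop (nhds 0) := by
  have h := hΦ.2 t
  have h2 := h.const_sub 1
  rw [sub_self] at h2
  exact h2

lemma card_filter_shift (A : Finset H) (t : H) (S : Set H) :
    (A.filter (fun z => z * t ∈ S)).card = ((A.image (· * t)).filter (· ∈ S)).card := by
  rw [Finset.filter_image]
  exact (Finset.card_image_of_injective _ (mul_left_injective t)).symm

lemma card_filter_le_aux (A B : Finset H) (S : Set H) :
    (B.filter (· ∈ S)).card ≤ (A.filter (· ∈ S)).card + (B \ A).card := by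
  calc (B.filter (· ∈ S)).card ≤ ((A.filter (· ∈ S)) ∪ (B \ A)).card := by
        apply Finset.card_le_card
        intro z hz
        simp only [mem_filter, mem_union, mem_sdiff] at *
        by_cases h : z ∈ A
        · exact Or.inl ⟨h, hz.2⟩
        · exact Or.inr (Finset.mem_sdiff.2 ⟨hz.1, h⟩)
    _ ≤ _ := Finset.card_union_le _ _

lemma dens_shift_diff (hΦ : rightFolner Φ) (t : H) (S : Set H) (n : ℕ) :
    dens Φ S n ≤ dens Φ {z | z * t ∈ S} n + err Φ t n ∧
    dens Φ {z | z * t ∈ S} n ≤ dens Φ S n + err Φ t n := by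
  set A := Φ n with hA
  set B := A.image (· * t) with hB
  have hcard : B.card = A.card := Finset.card_image_of_injective _ (mul_left_injective t)
  have hApos : (0:ℝ) < A.card := by exact_mod_cast Finset.card_pos.2 (hΦ.1 n)
  have hshift : ((A.filter (· ∈ {z | z * t ∈ S})).card) = ((B.filter (· ∈ S)).card) :=
    card_filter_shift A t S
  have h1 : ((B.filter (· ∈ S)).card : ℝ) ≤ (A.filter (· ∈ S)).card + ((B \ A).card : ℝ) := by
    exact_mod_cast card_filter_le_aux A B S
  have h2 : ((A.filter (· ∈ S)).card : ℝ) ≤ (B.filter (· ∈ S)).card + ((A \ B).card : ℝ) := by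
    exact_mod_cast card_filter_le_aux B A S
  have hBA : ((B \ A).card : ℝ) = A.card - ((A ∩ B).card : ℝ) := by
    have h := Finset.card_sdiff_add_card_inter B A
    have hc : (B ∩ A).card = (A ∩ B).card := by rw [Finset.inter_comm]
    have h' : ((B \ A).card : ℝ) + ((B ∩ A).card : ℝ) = (B.card : ℝ) := by exact_mod_cast h
    rw [hc, hcard] at h'
    linarith
  have hAB : ((A \ B).card : ℝ) = A.card - ((A ∩ B).card : ℝ) := by
    have h := Finset.card_sdiff_add_card_inter A B
    have h' : ((A \ B).card : ℝ) + ((A ∩ B).card : ℝ) = (A.card : ℝ) := by exact_mod_cast h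
    linarith
  have herr : err Φ t n = (A.card - ((A ∩ B).card : ℝ)) / A.card := by
    unfold err
    rw [← hA, ← hB]
    field_simp
  constructor
  · show ((A.filter (· ∈ S)).card : ℝ) / A.card ≤
      ((A.filter (· ∈ {z | z * t ∈ S})).card : ℝ) / A.card + err Φ t n
    rw [hshift, herr, ← add_div, div_le_div_iff_of_pos_right hApos]
    linarith
  · show ((A.filter (· ∈ {z | z * t ∈ S})).card : ℝ) / A.card ≤
      ((A.filter (· ∈ S)).card : ℝ) / A.card + err Φ t n
    rw [hshift, herr, ← add_div, div_le_div_iff_of_pos_right hApos]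
    linarith

lemma le_upperDensity_of_frequently {S : Set H} {c : ℝ}
    (h : ∃ᶠ n in atTop, c ≤ dens Φ S n) : c ≤ upperDensity Φ S := by
  rw [upperDensity_eq]
  exact Filter.le_limsup_of_frequently_le h
    ⟨1, Filter.eventually_map.2 (Filter.Eventually.of_forall (fun n => dens_le_one S n))⟩

lemma frequently_of_lt_upperDensity {S : Set H} {c : ℝ} (hc : c < upperDensity Φ S) :
    ∃ᶠ n in atTop, c ≤ dens Φ S n := by
  by_contra hcon
  rw [Filter.not_frequently] at hcon
  have : upperDensity Φ S ≤ c := by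
    rw [upperDensity_eq]
    apply Filter.limsup_le_of_le (Filter.isCoboundedUnder_le_of_le atTop (fun n => dens_nonneg S n))
    filter_upwards [hcon] with n hn
    simp only [not_le] at hn
    exact hn.le
  linarith

lemma transfer (hΦ : rightFolner Φ) {t : H} {S : Set H}
    (h : 0 < upperDensity Φ {z | z * t ∈ S}) : 0 < upperDensity Φ S := by
  set c := upperDensity Φ {z | z * t ∈ S} with hc
  have hf : ∃ᶠ n in atTop, c / 2 ≤ dens Φ {z | z * t ∈ S} n :=
    frequently_of_lt_upperDensity (by linarith)
  have he : ∀ᶠ n in atTop, err Φ t n < c / 4 :=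
    (err_tendsto hΦ t).eventually_lt_const (by linarith)
  have hfreq : ∃ᶠ n in atTop, c / 4 ≤ dens Φ S n := by
    refine (hf.and_eventually he).mono ?_
    rintro n ⟨h1, h2⟩
    have := (dens_shift_diff hΦ t S n).2
    linarith
  have := le_upperDensity_of_frequently hfreq
  linarith

lemma pair_count (T : Finset ℕ) :
    T.card ≤ 1 + ((T ×ˢ T).filter (fun p => p.1 < p.2)).card := by
  rcases T.eq_empty_or_nonempty with rfl | hT
  · simp
  · set i0 := T.min' hT with hi0
    have hmap : ∀ j ∈ T.erase i0, (i0, j) ∈ (T ×ˢ T).filter (fun p => p.1 < p.2) := by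
      intro j hj
      rw [Finset.mem_erase] at hj
      simp only [Finset.mem_filter, Finset.mem_product]
      exact ⟨⟨T.min'_mem hT, hj.2⟩, lt_of_le_of_ne (T.min'_le j hj.2) (Ne.symm hj.1)⟩
    have hinj : (↑(T.erase i0) : Set ℕ).InjOn (fun j => (i0, j)) := by
      intro a _ b _ h; simpa using h
    have := Finset.card_le_card_of_injOn (fun j => (i0, j)) hmap hinj
    rw [Finset.card_erase_of_mem (T.min'_mem hT)] at this
    omega

lemma sum_card_le (A : Finset H) (N : ℕ) (S : ℕ → Set H) :
    ∑ i ∈ Finset.range N, (A.filter (· ∈ S i)).card ≤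
      A.card + ∑ p ∈ (Finset.range N ×ˢ Finset.range N).filter (fun p => p.1 < p.2),
        (A.filter (· ∈ S p.1 ∩ S p.2)).card := by
  have hL : ∑ i ∈ Finset.range N, (A.filter (· ∈ S i)).card
      = ∑ z ∈ A, ((Finset.range N).filter (fun i => z ∈ S i)).card := by
    simp only [Finset.card_filter]
    rw [Finset.sum_comm]
  have hR : ∑ p ∈ (Finset.range N ×ˢ Finset.range N).filter (fun p => p.1 < p.2),
        (A.filter (· ∈ S p.1 ∩ S p.2)).card
      = ∑ z ∈ A, ((((Finset.range N).filter (fun i => z ∈ S i)) ×ˢ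
          ((Finset.range N).filter (fun i => z ∈ S i))).filter (fun p => p.1 < p.2)).card := by
    simp only [Finset.card_filter]
    rw [Finset.sum_comm]
    apply Finset.sum_congr rfl
    intro z _
    rw [← Finset.card_filter, ← Finset.card_filter]
    congr 1
    ext p
    simp only [Finset.mem_filter, Finset.mem_product, Finset.mem_range, Set.mem_inter_iff]
    tauto
  rw [hL, hR]
  calc ∑ z ∈ A, ((Finset.range N).filter (fun i => z ∈ S i)).card
      ≤ ∑ z ∈ A, (1 + ((((Finset.range N).filter (fun i => z ∈ S i)) ×ˢ
          ((Finset.range N).filter (fun i => z ∈ S i))).filter (fun p => p.1 < p.2)).card) :=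
      Finset.sum_le_sum (fun z _ => pair_count _)
    _ = _ := by rw [Finset.sum_add_distrib, Finset.sum_const, smul_eq_mul, mul_one]

lemma key (hΦ : rightFolner Φ) {E : Set H} (hE : 0 < upperDensity Φ E) (t : ℕ → H) :
    ∃ i j : ℕ, i < j ∧ 0 < upperDensity Φ (E ∩ {z | z * ((t i)⁻¹ * t j) ∈ E}) ∧
      0 < upperDensity Φ (E ∩ {z | z * ((t j)⁻¹ * t i) ∈ E}) := by
  set δ := upperDensity Φ E with hδ
  obtain ⟨N, hN⟩ := exists_nat_gt (4 / δ)
  have hNδ : 4 < (N : ℝ) * δ := by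
    rw [div_lt_iff₀ hE] at hN; linarith
  have hNpos : 0 < N := by
    rcases Nat.eq_zero_or_pos N with rfl | h
    · exfalso; simp at hNδ; linarith
    · exact h
  have hNR : (0:ℝ) < N := by exact_mod_cast hNpos
  set P := (Finset.range N ×ˢ Finset.range N).filter (fun p => p.1 < p.2) with hP
  set b := 1 / (4 * (N:ℝ) * N) with hb
  have hbpos : 0 < b := by rw [hb]; positivity
  have hfreq : ∃ᶠ n in atTop, δ / 2 ≤ dens Φ E n :=
    frequently_of_lt_upperDensity (by linarith)
  have herr : ∀ᶠ n in atTop, ∀ i ∈ Finset.range N, err Φ (t i) n ≤ δ / 8 := by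
    rw [Filter.eventually_all_finset]
    intro i _
    exact ((err_tendsto hΦ (t i)).eventually_lt_const
      (show (0:ℝ) < δ/8 by linarith)).mono (fun n h => h.le)
  have hmain : ∃ᶠ n in atTop, ∃ p ∈ P,
      b ≤ dens Φ ({z | z * t p.1 ∈ E} ∩ {z | z * t p.2 ∈ E}) n := by
    refine (hfreq.and_eventually herr).mono ?_
    rintro n ⟨h1, h2⟩
    have hA : ∀ i ∈ Finset.range N, δ/2 - δ/8 ≤ dens Φ {z | z * t i ∈ E} n := by
      intro i hi
      have hd := (dens_shift_diff hΦ (t i) E n).1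
      have he := h2 i hi
      linarith
    have hsum1 : (N:ℝ) * (δ/2 - δ/8) ≤ ∑ i ∈ Finset.range N, dens Φ {z | z * t i ∈ E} n := by
      calc (N:ℝ) * (δ/2 - δ/8) = ∑ _i ∈ Finset.range N, (δ/2 - δ/8) := by
            rw [Finset.sum_const, Finset.card_range, nsmul_eq_mul]
        _ ≤ _ := Finset.sum_le_sum hA
    have hApos : (0:ℝ) < ((Φ n).card : ℝ) := by exact_mod_cast Finset.card_pos.2 (hΦ.1 n)
    have hsum2 : ∑ i ∈ Finset.range N, dens Φ {z | z * t i ∈ E} n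
        ≤ 1 + ∑ p ∈ P, dens Φ ({z | z * t p.1 ∈ E} ∩ {z | z * t p.2 ∈ E}) n := by
      have hc := sum_card_le (Φ n) N (fun i => {z | z * t i ∈ E})
      have hcR : (∑ i ∈ Finset.range N, (((Φ n).filter (· ∈ {z | z * t i ∈ E})).card : ℝ))
          ≤ ((Φ n).card : ℝ) + ∑ p ∈ P,
            (((Φ n).filter (· ∈ ({z | z * t p.1 ∈ E} ∩ {z | z * t p.2 ∈ E}))).card : ℝ) := by
        exact_mod_cast hc
      unfold dens
      rw [← Finset.sum_div, ← Finset.sum_div]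
      calc (∑ i ∈ Finset.range N, (((Φ n).filter (· ∈ {z | z * t i ∈ E})).card : ℝ)) / ((Φ n).card : ℝ)
          ≤ (((Φ n).card : ℝ) + ∑ p ∈ P,
            (((Φ n).filter (· ∈ ({z | z * t p.1 ∈ E} ∩ {z | z * t p.2 ∈ E}))).card : ℝ)) / ((Φ n).card : ℝ) := by
            rw [div_le_div_iff_of_pos_right hApos]; exact hcR
        _ = _ := by rw [add_div, div_self (ne_of_gt hApos)]; congr!
    have h38 : (N:ℝ) * (δ/2 - δ/8) = 3/8 * ((N:ℝ) * δ) := by ring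
    have hsumP : 1/2 ≤ ∑ p ∈ P, dens Φ ({z | z * t p.1 ∈ E} ∩ {z | z * t p.2 ∈ E}) n := by
      linarith
    by_contra hcon
    push_neg at hcon
    have hle : ∑ p ∈ P, dens Φ ({z | z * t p.1 ∈ E} ∩ {z | z * t p.2 ∈ E}) n
        ≤ ∑ _p ∈ P, b := Finset.sum_le_sum (fun p hp => (hcon p hp).le)
    have hPcard : ((P.card : ℝ)) ≤ (N:ℝ) * N := by
      have h1 : P.card ≤ N * N := by
        calc P.card ≤ ((Finset.range N) ×ˢ (Finset.range N)).card := Finset.card_filter_le _ _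
          _ = N * N := by rw [Finset.card_product, Finset.card_range]
      exact_mod_cast h1
    rw [Finset.sum_const, nsmul_eq_mul] at hle
    have hfinal : (P.card : ℝ) * b ≤ ((N:ℝ) * N) * b :=
      mul_le_mul_of_nonneg_right hPcard hbpos.le
    have hbval : ((N:ℝ) * N) * b = 1/4 := by
      rw [hb]; field_simp
    linarith
  have hpig : ∃ p ∈ P, ∃ᶠ n in atTop,
      b ≤ dens Φ ({z | z * t p.1 ∈ E} ∩ {z | z * t p.2 ∈ E}) n := by
    by_contra hcon
    push_neg at hcon
    have hev : ∀ᶠ n in atTop, ∀ p ∈ P,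
        ¬ (b ≤ dens Φ ({z | z * t p.1 ∈ E} ∩ {z | z * t p.2 ∈ E}) n) := by
      rw [Filter.eventually_all_finset]
      intro p hp
      have h := hcon p hp
      rw [← Filter.not_frequently]
      exact Filter.not_frequently.2 (h.mono fun n hn => not_le.2 hn)
    obtain ⟨n, ⟨p, hp, hbp⟩, hall⟩ := (hmain.and_eventually hev).exists
    exact hall p hp hbp
  obtain ⟨p, hp, hfreqp⟩ := hpig
  have hij : p.1 < p.2 := (Finset.mem_filter.1 hp).2
  have hpos : 0 < upperDensity Φ ({z | z * t p.1 ∈ E} ∩ {z | z * t p.2 ∈ E}) :=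
    lt_of_lt_of_le hbpos (le_upperDensity_of_frequently hfreqp)
  have hset1 : ({z : H | z * t p.1 ∈ E} ∩ {z | z * t p.2 ∈ E})
      = {z | z * t p.1 ∈ E ∩ {w | w * ((t p.1)⁻¹ * t p.2) ∈ E}} := by
    ext z
    simp only [Set.mem_inter_iff, Set.mem_setOf_eq]
    have hz : z * t p.1 * ((t p.1)⁻¹ * t p.2) = z * t p.2 := by group
    rw [hz]
  have hset2 : ({z : H | z * t p.1 ∈ E} ∩ {z | z * t p.2 ∈ E})
      = {z | z * t p.2 ∈ E ∩ {w | w * ((t p.2)⁻¹ * t p.1) ∈ E}} := by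
    ext z
    simp only [Set.mem_inter_iff, Set.mem_setOf_eq]
    have hz : z * t p.2 * ((t p.2)⁻¹ * t p.1) = z * t p.1 := by group
    rw [hz]
    tauto
  exact ⟨p.1, p.2, hij, transfer hΦ (hset1 ▸ hpos), transfer hΦ (hset2 ▸ hpos)⟩




lemma sort_insert_max {m : ℕ} {F : Finset ℕ} (h : ∀ b ∈ F, b ≤ m) (hm : m ∉ F) :
    (insert m F).sort (· ≤ ·) = F.sort (· ≤ ·) ++ [m] := by
  have h1 : List.Perm ((insert m F).sort (· ≤ ·)) (m :: F.sort (· ≤ ·)) :=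
    (Finset.sort_perm_toList _ _).trans
      ((Finset.toList_insert hm).trans ((Finset.sort_perm_toList _ _).symm.cons m))
  have h2 : List.Perm ((insert m F).sort (· ≤ ·)) (F.sort (· ≤ ·) ++ [m]) :=
    h1.trans (List.perm_append_singleton m _).symm
  refine List.Perm.eq_of_pairwise' (Finset.pairwise_sort _ _) ?_ h2
  rw [List.pairwise_append]
  refine ⟨Finset.pairwise_sort _ _, List.pairwise_singleton _ _, ?_⟩
  intro a ha b hb
  rw [List.mem_singleton] at hb
  subst hb
  exact h a ((Finset.mem_sort _).1 ha)

section
variable {G : Type*} [Group G]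

lemma prodInc_insert_max (x : ℕ → G) {m : ℕ} {F : Finset ℕ}
    (h : ∀ b ∈ F, b ≤ m) (hm : m ∉ F) :
    prodInc (insert m F) x = prodInc F x * x m := by
  unfold prodInc
  rw [sort_insert_max h hm, List.map_append, List.prod_append]
  simp

lemma prodDec_insert_max (x : ℕ → G) {m : ℕ} {F : Finset ℕ}
    (h : ∀ b ∈ F, b ≤ m) (hm : m ∉ F) :
    prodDec (insert m F) x = x m * prodDec F x := by
  unfold prodDec
  rw [sort_insert_max h hm, List.reverse_append, List.map_append, List.prod_append]
  simp

lemma prodInc_empty (x : ℕ → G) : prodInc (∅ : Finset ℕ) x = 1 := by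
  unfold prodInc; rw [Finset.sort_empty]; simp

lemma prodDec_empty (x : ℕ → G) : prodDec (∅ : Finset ℕ) x = 1 := by
  unfold prodDec; rw [Finset.sort_empty]; simp

lemma Ico_succ_insert {i j : ℕ} (hij : i ≤ j) :
    Finset.Ico i (j + 1) = insert j (Finset.Ico i j) := by
  ext k
  simp only [Finset.mem_Ico, Finset.mem_insert]
  omega

lemma prodInc_range_mul_Ico (x : ℕ → G) {i j : ℕ} (hij : i ≤ j) :
    prodInc (Finset.range i) x * prodInc (Finset.Ico i j) x = prodInc (Finset.range j) x := by
  induction j, hij using Nat.le_induction with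
  | base => rw [Finset.Ico_self, prodInc_empty, mul_one]
  | succ j hij ih =>
    rw [Ico_succ_insert hij, Finset.range_add_one,
      prodInc_insert_max x (fun b hb => (Finset.mem_Ico.1 hb).2.le) (by simp),
      prodInc_insert_max x (fun b hb => (Finset.mem_range.1 hb).le) (by simp),
      ← mul_assoc, ih]

lemma prodDec_Ico_mul_range (x : ℕ → G) {i j : ℕ} (hij : i ≤ j) :
    prodDec (Finset.Ico i j) x * prodDec (Finset.range i) x = prodDec (Finset.range j) x := by
  induction j, hij using Nat.le_induction with
  | base => rw [Finset.Ico_self, prodDec_empty, one_mul]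
  | succ j hij ih =>
    rw [Ico_succ_insert hij, Finset.range_add_one,
      prodDec_insert_max x (fun b hb => (Finset.mem_Ico.1 hb).2.le) (by simp),
      prodDec_insert_max x (fun b hb => (Finset.mem_range.1 hb).le) (by simp),
      mul_assoc, ih]

end
end Stmt16Aux

/-- If `E ⊆ G × G` has positive right upper density with respect to a right Følner sequence
`Φ` on `G × G`, then `{g : d̄_Φ(E ∩ E·(g⁻¹, e)) > 0}` is both right and left IP*. -/
theorem stmt16 {G : Type*} [Group G] [Countable G]
    (Φ : ℕ → Finset (G × G)) (hΦ : rightFolner Φ) (E : Set (G × G))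
    (hE : 0 < upperDensity Φ E) :
    rightIPStar { g : G | 0 < upperDensity Φ (E ∩ { z : G × G | (z.1 * g, z.2) ∈ E }) } ∧
      leftIPStar { g : G | 0 < upperDensity Φ (E ∩ { z : G × G | (z.1 * g, z.2) ∈ E }) } := by
  constructor
  · intro x
    obtain ⟨i, j, hij, h1, -⟩ :=
      Stmt16Aux.key hΦ hE (fun i => (prodInc (Finset.range i) x, (1 : G)))
    set g := prodInc (Finset.Ico i j) x with hg
    have hgg : (prodInc (Finset.range i) x)⁻¹ * prodInc (Finset.range j) x = g := by
      rw [← Stmt16Aux.prodInc_range_mul_Ico x hij.le]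
      group
      exact hg.symm
    have hprod : ((prodInc (Finset.range i) x, (1:G)))⁻¹ *
        ((prodInc (Finset.range j) x, (1:G))) = (g, (1:G)) := by
      rw [Prod.ext_iff]
      simp [hgg]
    rw [hprod] at h1
    have hsetE : {z : G × G | z * (g, (1:G)) ∈ E} = {z : G × G | (z.1 * g, z.2) ∈ E} := by
      ext z
      have hz : z * (g, (1:G)) = (z.1 * g, z.2) := by
        rw [Prod.ext_iff]; simp
      simp only [Set.mem_setOf_eq, hz]
    rw [hsetE] at h1
    exact ⟨g, h1, ⟨Finset.Ico i j, Finset.nonempty_Ico.2 hij, rfl⟩⟩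
  · intro x
    obtain ⟨i, j, hij, -, h2⟩ :=
      Stmt16Aux.key hΦ hE (fun i => ((prodDec (Finset.range i) x)⁻¹, (1 : G)))
    set g := prodDec (Finset.Ico i j) x with hg
    have hgg : ((prodDec (Finset.range j) x)⁻¹)⁻¹ * (prodDec (Finset.range i) x)⁻¹ = g := by
      rw [← Stmt16Aux.prodDec_Ico_mul_range x hij.le]
      group
      exact hg.symm
    have hprod : (((prodDec (Finset.range j) x)⁻¹, (1:G)))⁻¹ *
        (((prodDec (Finset.range i) x)⁻¹, (1:G))) = (g, (1:G)) := by
      rw [Prod.ext_iff]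
      simp [← hgg]
    rw [hprod] at h2
    have hsetE : {z : G × G | z * (g, (1:G)) ∈ E} = {z : G × G | (z.1 * g, z.2) ∈ E} := by
      ext z
      have hz : z * (g, (1:G)) = (z.1 * g, z.2) := by
        rw [Prod.ext_iff]; simp
      simp only [Set.mem_setOf_eq, hz]
    rw [hsetE] at h2
    exact ⟨g, h2, ⟨Finset.Ico i j, Finset.nonempty_Ico.2 hij, rfl⟩⟩
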